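/- arXiv:0901.1010 — 3 statements merged into one kernel-verified Lean document; each statement's English description precedes it below -/
import Mathlib

section
/- For all integers r ≥ 3, s ≥ 3 and t, every proper 4-coloring f of the triangulation T(r,s,t) has even degree, i.e., deg(f) ≡ 0 (mod 2). (This is the specialization to the 6-regular triangulations T(r,s,t) of Tutte's lemma that the degree of a 4-coloring is congruent modulo 2 to the sum of the vertex degrees over all vertices of any fixed color.) -/
/-- The subgroup Λ of ℤ² generated by (r,0) and (−t,s). -/
def torusLattice (r s t : ℤ) : AddSubgroup (ℤ × ℤ) :=
  AddSubgroup.closure {(r, 0), (-t, s)}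

/-- The vertex set ℤ²/Λ of the triangulation T(r,s,t). -/
abbrev TorusV (r s t : ℤ) := (ℤ × ℤ) ⧸ torusLattice r s t

/-- The quotient map ℤ² → ℤ²/Λ. -/
def tmk (r s t : ℤ) : (ℤ × ℤ) →+ TorusV r s t := QuotientAddGroup.mk' (torusLattice r s t)

/-- The six neighbour displacement vectors. -/
def hexDirs : Finset (ℤ × ℤ) := {(1,0), (-1,0), (0,1), (0,-1), (1,1), (-1,-1)}

/-- The triangulation T(r,s,t) of the torus: two distinct vertices are adjacent
iff their difference is the image of one of the six displacement vectors. -/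
def TriT (r s t : ℤ) : SimpleGraph (TorusV r s t) where
  Adj u v := u ≠ v ∧ ∃ d ∈ hexDirs, v - u = tmk r s t d
  symm := by
    refine ⟨?_⟩
    rintro u v ⟨hne, d, hd, hsub⟩
    refine ⟨hne.symm, -d, ?_, ?_⟩
    · fin_cases hd <;> decide
    · rw [show u - v = -(v - u) from (neg_sub v u).symm, hsub, ← map_neg]
  loopless := ⟨fun u h => h.1 rfl⟩

/-- A proper `q`-coloring of a simple graph. -/
def IsProperColoring {V : Type*} (G : SimpleGraph V) {q : ℕ} (f : V → Fin q) : Prop :=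
  ∀ ⦃u v : V⦄, G.Adj u v → f u ≠ f v

/-- The sign contribution of a face whose ordered vertex colors are `(a,b,c)`:
`+1` for the cyclic orientations of `(0,1,2)`, `-1` for those of `(0,2,1)`,
`0` otherwise. -/
def faceSign (a b c : Fin 4) : ℤ :=
  if (a, b, c) = ((0 : Fin 4), (1 : Fin 4), (2 : Fin 4)) ∨ (a, b, c) = (1, 2, 0)
      ∨ (a, b, c) = (2, 0, 1) then 1
  else if (a, b, c) = ((0 : Fin 4), (2 : Fin 4), (1 : Fin 4)) ∨ (a, b, c) = (2, 1, 0)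
      ∨ (a, b, c) = (1, 0, 2) then -1
  else 0

/-- The degree of a 4-coloring of T(r,s,t): the sum over all triangular faces
(each face counted exactly once, via the canonical vertex representatives in
the box [0,r)×[0,s)) of the signed contributions of the up-face and the
down-face based at each vertex. -/
def degT (r s t : ℤ) (f : TorusV r s t → Fin 4) : ℤ :=
  ∑ i ∈ Finset.range r.toNat, ∑ j ∈ Finset.range s.toNat,
    (faceSign (f (tmk r s t ((i : ℤ), (j : ℤ))))
              (f (tmk r s t ((i : ℤ) + 1, (j : ℤ) + 1)))
              (f (tmk r s t ((i : ℤ), (j : ℤ) + 1)))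
      + faceSign (f (tmk r s t ((i : ℤ), (j : ℤ))))
                 (f (tmk r s t ((i : ℤ) + 1, (j : ℤ))))
                 (f (tmk r s t ((i : ℤ) + 1, (j : ℤ) + 1))))

lemma mem_lattice_iff (r s t : ℤ) (p : ℤ × ℤ) :
    p ∈ torusLattice r s t ↔ ∃ a b : ℤ, a * r - b * t = p.1 ∧ b * s = p.2 := by
  rw [torusLattice, AddSubgroup.mem_closure_pair]
  constructor
  · rintro ⟨a, b, rfl⟩
    exact ⟨a, b, by constructor <;> simp [Prod.ext_iff, smul_eq_mul] <;> ring⟩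
  · rintro ⟨a, b, h1, h2⟩
    refine ⟨a, b, ?_⟩
    ext <;> simp [smul_eq_mul] <;> omega

lemma not_mem_lattice (r s t : ℤ) (hr : 3 ≤ r) (hs : 3 ≤ s) (d : ℤ × ℤ)
    (hd : d = (1,0) ∨ d = (0,1) ∨ d = (1,1)) : d ∉ torusLattice r s t := by
  rw [mem_lattice_iff]
  rintro ⟨a, b, h1, h2⟩
  rcases hd with rfl | rfl | rfl <;> simp at h1 h2
  · have hb : b = 0 := by omega
    subst hb
    have : r ∣ 1 := ⟨a, by linear_combination -h1⟩
    have := Int.le_of_dvd one_pos this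
    omega
  · have : s ∣ 1 := ⟨b, by linear_combination -h2⟩
    have := Int.le_of_dvd one_pos this
    omega
  · have : s ∣ 1 := ⟨b, by linear_combination -h2⟩
    have := Int.le_of_dvd one_pos this
    omega

def ind3 (x : Fin 4) : ℤ := if x = 3 then 1 else 0

lemma faceSign_parity (a b c : Fin 4) (hab : a ≠ b) (hbc : b ≠ c) (hac : a ≠ c) :
    (faceSign a b c - (1 + ind3 a + ind3 b + ind3 c)) % 2 = 0 := by
  revert hab hbc hac; revert a b c; decide

lemma color_ne (r s t : ℤ) (hr : 3 ≤ r) (hs : 3 ≤ s)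
    (f : TorusV r s t → Fin 4) (hf : IsProperColoring (TriT r s t) f)
    (p d : ℤ × ℤ) (hdhex : d ∈ hexDirs)
    (hd : d = (1,0) ∨ d = (0,1) ∨ d = (1,1)) :
    f (tmk r s t p) ≠ f (tmk r s t (p + d)) := by
  apply hf
  refine And.intro ?_ ⟨d, hdhex, ?_⟩
  · intro h
    apply not_mem_lattice r s t hr hs d hd
    have : tmk r s t (p + d) - tmk r s t p = 0 := by rw [← h, sub_self]
    rw [map_add, add_sub_cancel_left] at this
    exact (QuotientAddGroup.eq_zero_iff d).mp this
  · rw [map_add, add_sub_cancel_left]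

lemma box_bij (r s t : ℤ) (hr : 3 ≤ r) (hs : 3 ≤ s) :
    Function.Bijective (fun p : Fin r.toNat × Fin s.toNat =>
      tmk r s t ((p.1 : ℤ), (p.2 : ℤ))) := by
  constructor
  · rintro ⟨i, j⟩ ⟨i', j'⟩ h
    simp only [tmk, QuotientAddGroup.mk'_eq_mk'] at h
    obtain ⟨z, hz, hzeq⟩ := h
    have hz' : ((i' : ℤ) - i, (j' : ℤ) - j) ∈ torusLattice r s t := by
      have : z = ((i' : ℤ) - i, (j' : ℤ) - j) := by
        have := hzeq
        rw [Prod.ext_iff] at this ⊢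
        simp at this ⊢
        omega
      rwa [this] at hz
    rw [mem_lattice_iff] at hz'
    obtain ⟨a, b, h1, h2⟩ := hz'
    simp only at h1 h2
    have hi : (i : ℤ) < r := by have := i.isLt; omega
    have hi' : (i' : ℤ) < r := by have := i'.isLt; omega
    have hj : (j : ℤ) < s := by have := j.isLt; omega
    have hj' : (j' : ℤ) < s := by have := j'.isLt; omega
    have hb : b = 0 := by
      rcases lt_trichotomy b 0 with h|h|h
      · nlinarith [mul_le_mul_of_nonneg_right (show b ≤ -1 by omega) (show (0:ℤ) ≤ s by omega)]
      · exact h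
      · nlinarith [mul_le_mul_of_nonneg_right (show 1 ≤ b by omega) (show (0:ℤ) ≤ s by omega)]
    subst hb
    simp at h2
    have ha : a = 0 := by
      rcases lt_trichotomy a 0 with h|h|h
      · nlinarith [mul_le_mul_of_nonneg_right (show a ≤ -1 by omega) (show (0:ℤ) ≤ r by omega)]
      · exact h
      · nlinarith [mul_le_mul_of_nonneg_right (show 1 ≤ a by omega) (show (0:ℤ) ≤ r by omega)]
    subst ha
    simp at h1
    have : (i : ℕ) = i' ∧ (j : ℕ) = j' := by omega
    ext <;> simp [this.1, this.2]
  · intro v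
    obtain ⟨⟨x, y⟩, rfl⟩ := QuotientAddGroup.mk'_surjective (torusLattice r s t) v
    have hrpos : (0:ℤ) < r := by omega
    have hspos : (0:ℤ) < s := by omega
    set b : ℤ := y / s with hbdef
    set j : ℤ := y % s with hjdef
    set x' : ℤ := x + b * t with hxdef
    set a : ℤ := x' / r with hadef
    set i : ℤ := x' % r with hidef
    have hjlt : 0 ≤ j ∧ j < s := ⟨Int.emod_nonneg y (by omega), Int.emod_lt_of_pos y hspos⟩
    have hilt : 0 ≤ i ∧ i < r := ⟨Int.emod_nonneg x' (by omega), Int.emod_lt_of_pos x' hrpos⟩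
    refine ⟨(⟨i.toNat, by omega⟩, ⟨j.toNat, by omega⟩), ?_⟩
    simp only [tmk, QuotientAddGroup.mk'_eq_mk']
    refine ⟨(x - i.toNat, y - j.toNat), ?_, ?_⟩
    · rw [mem_lattice_iff]
      refine ⟨a, b, ?_, ?_⟩ <;> simp only
      · have h1 : r * a + i = x' := Int.mul_ediv_add_emod x' r
        have h2 : (i.toNat : ℤ) = i := Int.toNat_of_nonneg hilt.1
        rw [h2]; linarith [h1]
      · have h1 : s * b + j = y := Int.mul_ediv_add_emod y s
        have h2 : (j.toNat : ℤ) = j := Int.toNat_of_nonneg hjlt.1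
        rw [h2]; linarith [h1]
    · ext <;> simp <;> ring

/-- Every proper 4-coloring of the triangulation T(r,s,t) has even degree. -/
theorem deg_even (r s t : ℤ) (hr : 3 ≤ r) (hs : 3 ≤ s)
    (f : TorusV r s t → Fin 4) (hf : IsProperColoring (TriT r s t) f) :
    (2 : ℤ) ∣ degT r s t f := by
  classical
  haveI fV : Fintype (TorusV r s t) := Fintype.ofBijective _ (box_bij r s t hr hs)
  -- summing a function over the box equals summing it over the torus
  have hsum : ∀ g : TorusV r s t → ℤ,
      ∑ i ∈ Finset.range r.toNat, ∑ j ∈ Finset.range s.toNat,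
        g (tmk r s t ((i : ℤ), (j : ℤ))) = ∑ v, g v := by
    intro g
    rw [← Equiv.sum_comp (Equiv.ofBijective _ (box_bij r s t hr hs)) g,
      Fintype.sum_prod_type, Finset.sum_range]
    apply Finset.sum_congr rfl; intro a _
    rw [Finset.sum_range]
    apply Finset.sum_congr rfl; intro b _
    simp [Equiv.ofBijective_apply]
  set T : ℤ := ∑ v, ind3 (f v) with hT
  have hS01 : ∑ i ∈ Finset.range r.toNat, ∑ j ∈ Finset.range s.toNat,
      ind3 (f (tmk r s t ((i : ℤ), (j : ℤ) + 1))) = T := by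
    have h2 : ∑ v, ind3 (f (v + tmk r s t (0, 1))) = T :=
      Fintype.sum_equiv (Equiv.addRight (tmk r s t (0, 1)))
        (fun v => ind3 (f (v + tmk r s t (0, 1)))) (fun v => ind3 (f v)) (fun x => rfl)
    rw [← h2, ← hsum (fun v => ind3 (f (v + tmk r s t (0, 1))))]
    apply Finset.sum_congr rfl; intro i _
    apply Finset.sum_congr rfl; intro j _
    rw [← map_add]
    norm_num
  have hS10 : ∑ i ∈ Finset.range r.toNat, ∑ j ∈ Finset.range s.toNat,
      ind3 (f (tmk r s t ((i : ℤ) + 1, (j : ℤ)))) = T := by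
    have h2 : ∑ v, ind3 (f (v + tmk r s t (1, 0))) = T :=
      Fintype.sum_equiv (Equiv.addRight (tmk r s t (1, 0)))
        (fun v => ind3 (f (v + tmk r s t (1, 0)))) (fun v => ind3 (f v)) (fun x => rfl)
    rw [← h2, ← hsum (fun v => ind3 (f (v + tmk r s t (1, 0))))]
    apply Finset.sum_congr rfl; intro i _
    apply Finset.sum_congr rfl; intro j _
    rw [← map_add]
    norm_num
  have hkey : (2 : ℤ) ∣ degT r s t f - (T + T) := by
    nth_rewrite 1 [← hS01]
    rw [← hS10]
    rw [degT, ← Finset.sum_add_distrib, ← Finset.sum_sub_distrib]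
    apply Finset.dvd_sum; intro i _
    rw [← Finset.sum_add_distrib, ← Finset.sum_sub_distrib]
    apply Finset.dvd_sum; intro j _
    set a := f (tmk r s t ((i : ℤ), (j : ℤ))) with ha
    set b := f (tmk r s t ((i : ℤ) + 1, (j : ℤ) + 1)) with hb
    set c := f (tmk r s t ((i : ℤ), (j : ℤ) + 1)) with hc
    set d := f (tmk r s t ((i : ℤ) + 1, (j : ℤ))) with hd
    have e11 : ((i : ℤ) + 1, (j : ℤ) + 1) = ((i : ℤ), (j : ℤ)) + (1, 1) := by simp [Prod.ext_iff]
    have e01 : ((i : ℤ), (j : ℤ) + 1) = ((i : ℤ), (j : ℤ)) + (0, 1) := by simp [Prod.ext_iff]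
    have e10 : ((i : ℤ) + 1, (j : ℤ)) = ((i : ℤ), (j : ℤ)) + (1, 0) := by simp [Prod.ext_iff]
    have e01_11 : ((i : ℤ) + 1, (j : ℤ) + 1) = ((i : ℤ), (j : ℤ) + 1) + (1, 0) := by simp [Prod.ext_iff]
    have e10_11 : ((i : ℤ) + 1, (j : ℤ) + 1) = ((i : ℤ) + 1, (j : ℤ)) + (0, 1) := by simp [Prod.ext_iff]
    have hab : a ≠ b := by
      rw [ha, hb, e11]
      exact color_ne r s t hr hs f hf _ _ (by decide) (by tauto)
    have hbc : b ≠ c := by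
      rw [hb, hc, e01_11]
      exact (color_ne r s t hr hs f hf _ _ (by decide) (by tauto)).symm
    have hac : a ≠ c := by
      rw [ha, hc, e01]
      exact color_ne r s t hr hs f hf _ _ (by decide) (by tauto)
    have had : a ≠ d := by
      rw [ha, hd, e10]
      exact color_ne r s t hr hs f hf _ _ (by decide) (by tauto)
    have hdb : d ≠ b := by
      rw [hd, hb, e10_11]
      exact color_ne r s t hr hs f hf _ _ (by decide) (by tauto)
    have k1 : (2 : ℤ) ∣ faceSign a b c - (1 + ind3 a + ind3 b + ind3 c) :=
      Int.dvd_of_emod_eq_zero (faceSign_parity a b c hab hbc hac)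
    have k2 : (2 : ℤ) ∣ faceSign a d b - (1 + ind3 a + ind3 d + ind3 b) :=
      Int.dvd_of_emod_eq_zero (faceSign_parity a d b had hdb hab)
    have : faceSign a b c + faceSign a d b - (ind3 c + ind3 d)
        = (faceSign a b c - (1 + ind3 a + ind3 b + ind3 c))
          + (faceSign a d b - (1 + ind3 a + ind3 d + ind3 b))
          + 2 * (1 + ind3 a + ind3 b) := by ring
    rw [this]
    exact dvd_add (dvd_add k1 k2) ⟨_, rfl⟩
  have : degT r s t f = (degT r s t f - (T + T)) + 2 * T := by ring
  rw [this]
  exact dvd_add hkey ⟨T, rfl⟩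
end

section
/- Let r and s be integers. (a) If r, s ≥ 3 and there exists a proper 4-coloring of T(r,s) whose degree is ≡ 2 (mod 4), then there exists a proper 4-coloring of T(3r,3s) whose degree is ≡ 6 (mod 12). (b) If r ≥ 1, s ≥ 3 and there exists a proper 4-coloring of T(3r,s) whose degree is ≡ 2 (mod 4), or if r ≥ 3, s ≥ 1 and there exists a proper 4-coloring of T(r,3s) whose degree is ≡ 2 (mod 4), then there exists a proper 4-coloring of T(3r,3s) whose degree is ≡ 6 (mod 12). (c) If r, s ≥ 1 and there exists a proper 4-coloring of T(3r,3s) whose degree is ≡ 6 (mod 12), then for all odd positive integers p and q there exists a proper 4-coloring of T(3rp,3sq) whose degree is ≡ 6 (mod 12). -/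
open Classical in
/-- A single Kempe change. -/
def KempeStep {V : Type*} (G : SimpleGraph V) {q : ℕ} (f g : V → Fin q) : Prop :=
  ∃ a b : Fin q, a ≠ b ∧
    ∃ C : (G.induce {v | f v = a ∨ f v = b}).ConnectedComponent,
      ∀ v : V,
        g v = if h : f v = a ∨ f v = b then
                if (G.induce {v | f v = a ∨ f v = b}).connectedComponentMk ⟨v, h⟩ = C
                then Equiv.swap a b (f v) else f v
              else f v

/-- Kempe equivalence: a finite sequence of Kempe changes. -/
def KempeEquiv {V : Type*} (G : SimpleGraph V) {q : ℕ} (f g : V → Fin q) : Prop :=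
  Relation.ReflTransGen (KempeStep G) f g

/-- The six neighbour displacement vectors of the triangular lattice. -/
def hexDirsM (r s : ℕ) : Set (ZMod r × ZMod s) :=
  {(1,0), (-1,0), (0,1), (0,-1), (1,1), (-1,-1)}

/-- The triangulation `T(r,s)` of the torus. -/
def TriRS (r s : ℕ) : SimpleGraph (ZMod r × ZMod s) where
  Adj u v := u ≠ v ∧ v - u ∈ hexDirsM r s
  symm := ⟨by
    rintro u v ⟨hne, hmem⟩
    refine ⟨hne.symm, ?_⟩
    rw [show u - v = -(v - u) from (neg_sub v u).symm]
    simp only [hexDirsM, Set.mem_insert_iff, Set.mem_singleton_iff] at hmem ⊢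
    rcases hmem with h|h|h|h|h|h <;> rw [h] <;> simp [Prod.ext_iff]⟩
  loopless := ⟨fun u h => h.1 rfl⟩

/-- The degree of a 4-coloring of `T(r,s)`. -/
def degRS (r s : ℕ) (f : ZMod r × ZMod s → Fin 4) : ℤ :=
  ∑ i ∈ Finset.range r, ∑ j ∈ Finset.range s,
    (faceSign (f ((i : ZMod r), (j : ZMod s)))
              (f ((i : ZMod r) + 1, (j : ZMod s) + 1))
              (f ((i : ZMod r), (j : ZMod s) + 1))
      + faceSign (f ((i : ZMod r), (j : ZMod s)))
                 (f ((i : ZMod r) + 1, (j : ZMod s)))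
                 (f ((i : ZMod r) + 1, (j : ZMod s) + 1)))
open Finset

lemma per_shift (G : ℕ → ℤ) (r : ℕ) (h : ∀ n, G (n + r) = G n) :
    ∀ k n, G (n + k * r) = G n := by
  intro k
  induction k with
  | zero => simp
  | succ k ih =>
    intro n
    have : n + (k + 1) * r = (n + k * r) + r := by ring
    rw [this, h, ih]

lemma sum_per (G : ℕ → ℤ) (r a : ℕ) (h : ∀ n, G (n + r) = G n) :
    ∑ i ∈ range (a * r), G i = a * ∑ i ∈ range r, G i := by
  induction a with
  | zero => simp
  | succ a ih =>
    have : (a + 1) * r = a * r + r := by ring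
    rw [this, Finset.sum_range_add, ih]
    have h2 : ∀ x, G (a * r + x) = G x := fun x => by
      rw [Nat.add_comm, per_shift G r h]
    simp only [h2]
    push_cast
    ring

lemma lift_coloring (r s a b r' s' : ℕ) (hr' : r' = a * r) (hs' : s' = b * s)
    (hr : 3 ≤ r) (hs : 3 ≤ s)
    (f : ZMod r × ZMod s → Fin 4) (hf : IsProperColoring (TriRS r s) f) :
    ∃ g : ZMod r' × ZMod s' → Fin 4,
      IsProperColoring (TriRS r' s') g ∧
      degRS r' s' g = (a * b : ℕ) * degRS r s f := by
  subst hr' hs'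
  haveI : Fact (1 < r) := ⟨by omega⟩
  haveI : Fact (1 < s) := ⟨by omega⟩
  set π1 : ZMod (a * r) →+* ZMod r := ZMod.castHom (dvd_mul_left r a) (ZMod r) with hπ1
  set π2 : ZMod (b * s) →+* ZMod s := ZMod.castHom (dvd_mul_left s b) (ZMod s) with hπ2
  refine ⟨fun v => f (π1 v.1, π2 v.2), ?_, ?_⟩
  · rintro u v ⟨hne, hmem⟩
    simp only [hexDirsM, Set.mem_insert_iff, Set.mem_singleton_iff] at hmem
    have key : ∀ e1 : ZMod r, ∀ e2 : ZMod s, (e1, e2) ≠ 0 →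
        π1 (v.1 - u.1) = e1 → π2 (v.2 - u.2) = e2 →
        (e1, e2) ∈ hexDirsM r s →
        f (π1 u.1, π2 u.2) ≠ f (π1 v.1, π2 v.2) := by
      intro e1 e2 hne0 he1 he2 hmem'
      apply hf
      refine ⟨?_, ?_⟩
      · intro h
        apply hne0
        have h1 : π1 u.1 = π1 v.1 := congrArg Prod.fst h
        have h2 : π2 u.2 = π2 v.2 := congrArg Prod.snd h
        rw [map_sub, ← h1, sub_self] at he1
        rw [map_sub, ← h2, sub_self] at he2
        rw [← he1, ← he2]; rfl
      · have : (π1 v.1, π2 v.2) - (π1 u.1, π2 u.2) = (e1, e2) := by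
          rw [Prod.mk_sub_mk, ← map_sub, ← map_sub, he1, he2]
        rw [this]; exact hmem'
    have one_ne : (1 : ZMod r) ≠ 0 := one_ne_zero
    have one_ne' : (1 : ZMod s) ≠ 0 := one_ne_zero
    rcases hmem with h | h | h | h | h | h <;>
      [ exact key 1 0 (by simp [Prod.ext_iff]) (by rw [show v.1 - u.1 = (1 : ZMod (a*r)) from congrArg Prod.fst h, map_one]) (by rw [show v.2 - u.2 = (0 : ZMod (b*s)) from congrArg Prod.snd h, map_zero]) (by simp [hexDirsM]);
        exact key (-1) 0 (by simp [Prod.ext_iff]) (by rw [show v.1 - u.1 = (-1 : ZMod (a*r)) from congrArg Prod.fst h, map_neg, map_one]) (by rw [show v.2 - u.2 = (0 : ZMod (b*s)) from congrArg Prod.snd h, map_zero]) (by simp [hexDirsM]);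
        exact key 0 1 (by simp [Prod.ext_iff]) (by rw [show v.1 - u.1 = (0 : ZMod (a*r)) from congrArg Prod.fst h, map_zero]) (by rw [show v.2 - u.2 = (1 : ZMod (b*s)) from congrArg Prod.snd h, map_one]) (by simp [hexDirsM]);
        exact key 0 (-1) (by simp [Prod.ext_iff]) (by rw [show v.1 - u.1 = (0 : ZMod (a*r)) from congrArg Prod.fst h, map_zero]) (by rw [show v.2 - u.2 = (-1 : ZMod (b*s)) from congrArg Prod.snd h, map_neg, map_one]) (by simp [hexDirsM]);
        exact key 1 1 (by simp [Prod.ext_iff]) (by rw [show v.1 - u.1 = (1 : ZMod (a*r)) from congrArg Prod.fst h, map_one]) (by rw [show v.2 - u.2 = (1 : ZMod (b*s)) from congrArg Prod.snd h, map_one]) (by simp [hexDirsM]);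
        exact key (-1) (-1) (by simp [Prod.ext_iff]) (by rw [show v.1 - u.1 = (-1 : ZMod (a*r)) from congrArg Prod.fst h, map_neg, map_one]) (by rw [show v.2 - u.2 = (-1 : ZMod (b*s)) from congrArg Prod.snd h, map_neg, map_one]) (by simp [hexDirsM])]
  · set T : ℕ → ℕ → ℤ := fun i j =>
      faceSign (f ((i : ZMod r), (j : ZMod s)))
               (f ((i : ZMod r) + 1, (j : ZMod s) + 1))
               (f ((i : ZMod r), (j : ZMod s) + 1))
      + faceSign (f ((i : ZMod r), (j : ZMod s)))
                 (f ((i : ZMod r) + 1, (j : ZMod s)))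
                 (f ((i : ZMod r) + 1, (j : ZMod s) + 1)) with hT
    have hcast : ∀ i : ℕ, π1 ((i : ZMod (a * r))) = (i : ZMod r) := fun i => map_natCast π1 i
    have hcast2 : ∀ j : ℕ, π2 ((j : ZMod (b * s))) = (j : ZMod s) := fun j => map_natCast π2 j
    have step1 : degRS (a * r) (b * s) (fun v => f (π1 v.1, π2 v.2))
        = ∑ i ∈ range (a * r), ∑ j ∈ range (b * s), T i j := by
      unfold degRS
      refine Finset.sum_congr rfl fun i _ => Finset.sum_congr rfl fun j _ => ?_
      simp only [map_add, map_one, hcast, hcast2, hT]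
    have perT1 : ∀ j i, T (i + r) j = T i j := by
      intro j i
      have : ((i + r : ℕ) : ZMod r) = (i : ZMod r) := by
        push_cast [ZMod.natCast_self]; ring
      simp only [hT, this]
    have perT2 : ∀ i j, T i (j + s) = T i j := by
      intro i j
      have : ((j + s : ℕ) : ZMod s) = (j : ZMod s) := by
        push_cast [ZMod.natCast_self]; ring
      simp only [hT, this]
    rw [step1]
    have step2 : ∀ i, ∑ j ∈ range (b * s), T i j = b * ∑ j ∈ range s, T i j :=
      fun i => sum_per (T i) s b (perT2 i)
    simp only [step2]
    rw [← Finset.mul_sum]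
    rw [sum_per (fun i => ∑ j ∈ range s, T i j) r a
      (fun n => Finset.sum_congr rfl fun j _ => perT1 j n)]
    unfold degRS
    push_cast
    ring


/-- Degree-lifting lemma for periodic extensions of 4-colorings.
(a) A 4-coloring of T(r,s) of degree ≡ 2 (mod 4) yields one of T(3r,3s) of
degree ≡ 6 (mod 12).
(b) The same conclusion follows from a 4-coloring of T(3r,s) or of T(r,3s) of
degree ≡ 2 (mod 4).
(c) A 4-coloring of T(3r,3s) of degree ≡ 6 (mod 12) yields, for all odd
`p, q ≥ 1`, one of T(3rp,3sq) of degree ≡ 6 (mod 12). -/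
theorem degree_lifting :
    (∀ r s : ℕ, 3 ≤ r → 3 ≤ s →
      (∃ f : ZMod r × ZMod s → Fin 4,
          IsProperColoring (TriRS r s) f ∧ degRS r s f ≡ 2 [ZMOD 4]) →
      (∃ g : ZMod (3 * r) × ZMod (3 * s) → Fin 4,
          IsProperColoring (TriRS (3 * r) (3 * s)) g ∧
          degRS (3 * r) (3 * s) g ≡ 6 [ZMOD 12])) ∧
    (∀ r s : ℕ, 1 ≤ r → 3 ≤ s →
      (∃ f : ZMod (3 * r) × ZMod s → Fin 4,
          IsProperColoring (TriRS (3 * r) s) f ∧ degRS (3 * r) s f ≡ 2 [ZMOD 4]) →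
      (∃ g : ZMod (3 * r) × ZMod (3 * s) → Fin 4,
          IsProperColoring (TriRS (3 * r) (3 * s)) g ∧
          degRS (3 * r) (3 * s) g ≡ 6 [ZMOD 12])) ∧
    (∀ r s : ℕ, 3 ≤ r → 1 ≤ s →
      (∃ f : ZMod r × ZMod (3 * s) → Fin 4,
          IsProperColoring (TriRS r (3 * s)) f ∧ degRS r (3 * s) f ≡ 2 [ZMOD 4]) →
      (∃ g : ZMod (3 * r) × ZMod (3 * s) → Fin 4,
          IsProperColoring (TriRS (3 * r) (3 * s)) g ∧
          degRS (3 * r) (3 * s) g ≡ 6 [ZMOD 12])) ∧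
    (∀ r s : ℕ, 1 ≤ r → 1 ≤ s →
      (∃ f : ZMod (3 * r) × ZMod (3 * s) → Fin 4,
          IsProperColoring (TriRS (3 * r) (3 * s)) f ∧
          degRS (3 * r) (3 * s) f ≡ 6 [ZMOD 12]) →
      ∀ p q : ℕ, 0 < p → Odd p → 0 < q → Odd q →
        (∃ g : ZMod (3 * r * p) × ZMod (3 * s * q) → Fin 4,
            IsProperColoring (TriRS (3 * r * p) (3 * s * q)) g ∧
            degRS (3 * r * p) (3 * s * q) g ≡ 6 [ZMOD 12])) := by
  refine ⟨?_, ?_, ?_, ?_⟩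
  · rintro r s hr hs ⟨f, hf, hd⟩
    obtain ⟨g, hg, hdeg⟩ := lift_coloring r s 3 3 (3 * r) (3 * s) rfl rfl hr hs f hf
    refine ⟨g, hg, ?_⟩
    rw [hdeg]
    rw [Int.modEq_iff_dvd] at hd ⊢
    push_cast
    omega
  · rintro r s hr hs ⟨f, hf, hd⟩
    obtain ⟨g, hg, hdeg⟩ := lift_coloring (3 * r) s 1 3 (3 * r) (3 * s)
      (by ring) rfl (by omega) hs f hf
    refine ⟨g, hg, ?_⟩
    rw [hdeg]
    rw [Int.modEq_iff_dvd] at hd ⊢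
    push_cast
    omega
  · rintro r s hr hs ⟨f, hf, hd⟩
    obtain ⟨g, hg, hdeg⟩ := lift_coloring r (3 * s) 3 1 (3 * r) (3 * s)
      rfl (by ring) hr (by omega) f hf
    refine ⟨g, hg, ?_⟩
    rw [hdeg]
    rw [Int.modEq_iff_dvd] at hd ⊢
    push_cast
    omega
  · rintro r s hr hs ⟨f, hf, hd⟩ p q hp hop hq hoq
    obtain ⟨g, hg, hdeg⟩ := lift_coloring (3 * r) (3 * s) p q (3 * r * p) (3 * s * q)
      (by ring) (by ring) (by omega) (by omega) f hf
    refine ⟨g, hg, ?_⟩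
    rw [hdeg]
    obtain ⟨m, hm⟩ := hop.mul hoq
    have hpq : ((p * q : ℕ) : ℤ) = 2 * m + 1 := by exact_mod_cast congrArg (Nat.cast : ℕ → ℤ) hm
    calc ((p * q : ℕ) : ℤ) * degRS (3 * r) (3 * s) f
        ≡ ((p * q : ℕ) : ℤ) * 6 [ZMOD 12] := Int.ModEq.mul_left _ hd
      _ ≡ 6 [ZMOD 12] := by
          rw [hpq, Int.modEq_iff_dvd]
          exact ⟨-m, by ring⟩
end

section
/- Gluing lemma: Let L ≥ 3 and M ≥ 3 be integers, let c be a proper 4-coloring of T(L,M) and c' a proper 4-coloring of T(L,3), and suppose c'(x, 2) = c(x, M−1) for every x ∈ ZMod L (i.e., the two colorings have the same top row). Define c'' on (ZMod L) × (ZMod (M+3)) by: for y ∈ ZMod (M+3) with representative ŷ ∈ {0, …, M+2}, set c''(x,y) = c(x, ŷ) if 0 ≤ ŷ ≤ M−1 (with ŷ read in ZMod M), and c''(x,y) = c'(x, ŷ−M) if M ≤ ŷ ≤ M+2 (with ŷ−M read in ZMod 3). Then c'' is a proper 4-coloring of T(L, M+3) and deg(c'') = deg(c). -/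
/-- The coloring of T(L,M+3) obtained by stacking a coloring of T(L,M) (rows
`0 … M−1`) on top of a coloring of T(L,3) (rows `M … M+2`). -/
def glue (L M : ℕ) (c : ZMod L × ZMod M → Fin 4) (c' : ZMod L × ZMod 3 → Fin 4) :
    ZMod L × ZMod (M + 3) → Fin 4 := fun p =>
  if p.2.val < M then c (p.1, (p.2.val : ZMod M))
  else c' (p.1, ((p.2.val - M : ℕ) : ZMod 3))


lemma strip_identity : ∀ a0 a1 a2 b0 b1 b2 : Fin 4,
    (a0 ≠ a1 ∧ a1 ≠ a2 ∧ a0 ≠ a2 ∧ b0 ≠ b1 ∧ b1 ≠ b2 ∧ b0 ≠ b2 ∧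
     a0 ≠ b0 ∧ a1 ≠ b1 ∧ a2 ≠ b2 ∧ a0 ≠ b1 ∧ a1 ≠ b2 ∧ a2 ≠ b0) →
    (faceSign a0 b1 a1 + faceSign a0 b0 b1)
  + ((faceSign a1 b2 a2 + faceSign a1 b1 b2)
  + (faceSign a2 b0 a0 + faceSign a2 b2 b0))
  = faceSign b0 b1 b2 - faceSign a0 a1 a2 := by decide

section deg3
variable {L : ℕ} (hL : 3 ≤ L) (c' : ZMod L × ZMod 3 → Fin 4)
  (hc' : IsProperColoring (TriRS L 3) c')

lemma zmod3_pm : ∀ d : ZMod 3, d ≠ 0 → d = 1 ∨ d = -1 := by decide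

include hc' in
lemma col_ne (x : ZMod L) (j j' : ZMod 3) (h : j ≠ j') : c' (x, j) ≠ c' (x, j') := by
  apply hc'
  refine ⟨by simp [Prod.ext_iff, h], ?_⟩
  have : (x, j') - (x, j) = (0, j' - j) := by simp [Prod.ext_iff]
  rw [this]
  rcases zmod3_pm (j' - j) (sub_ne_zero.mpr (Ne.symm h)) with h1 | h1 <;>
    simp [hexDirsM, h1]

include hL hc' in
lemma horiz_ne (x : ZMod L) (j j' : ZMod 3) (h : j' = j ∨ j' = j + 1) :
    c' (x, j) ≠ c' (x + 1, j') := by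
  haveI : Fact (1 < L) := ⟨by omega⟩
  apply hc'
  have hx : x ≠ x + 1 := fun h => one_ne_zero (by linear_combination -h)
  refine ⟨by simp [Prod.ext_iff, hx], ?_⟩
  have : (x + 1, j') - (x, j) = (1, j' - j) := by simp [Prod.ext_iff]
  rw [this]
  rcases h with rfl | rfl <;> simp [hexDirsM]

include hL hc' in
lemma deg3_eq_zero : degRS L 3 c' = 0 := by
  have h21 : (2 : ZMod 3) + 1 = 0 := by decide
  have h11 : (1 : ZMod 3) + 1 = 2 := by decide
  have key : ∀ x : ZMod L,
      ((faceSign (c' (x, 0)) (c' (x+1, 1)) (c' (x, 1))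
        + faceSign (c' (x, 0)) (c' (x+1, 0)) (c' (x+1, 1)))
      + ((faceSign (c' (x, 1)) (c' (x+1, 2)) (c' (x, 2))
        + faceSign (c' (x, 1)) (c' (x+1, 1)) (c' (x+1, 2)))
      + (faceSign (c' (x, 2)) (c' (x+1, 0)) (c' (x, 0))
        + faceSign (c' (x, 2)) (c' (x+1, 2)) (c' (x+1, 0)))))
      = faceSign (c' (x+1, 0)) (c' (x+1, 1)) (c' (x+1, 2))
        - faceSign (c' (x, 0)) (c' (x, 1)) (c' (x, 2)) := by
    intro x
    exact strip_identity _ _ _ _ _ _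
      ⟨col_ne c' hc' x 0 1 (by decide), col_ne c' hc' x 1 2 (by decide),
       col_ne c' hc' x 0 2 (by decide), col_ne c' hc' (x+1) 0 1 (by decide),
       col_ne c' hc' (x+1) 1 2 (by decide), col_ne c' hc' (x+1) 0 2 (by decide),
       horiz_ne hL c' hc' x 0 0 (Or.inl rfl), horiz_ne hL c' hc' x 1 1 (Or.inl rfl),
       horiz_ne hL c' hc' x 2 2 (Or.inl rfl), horiz_ne hL c' hc' x 0 1 (Or.inr rfl),
       horiz_ne hL c' hc' x 1 2 (Or.inr (by decide)),
       horiz_ne hL c' hc' x 2 0 (Or.inr (by decide))⟩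
  have expand : ∀ x : ZMod L, (∑ j ∈ Finset.range 3,
      (faceSign (c' (x, (j : ZMod 3))) (c' (x + 1, (j : ZMod 3) + 1)) (c' (x, (j : ZMod 3) + 1))
        + faceSign (c' (x, (j : ZMod 3))) (c' (x + 1, (j : ZMod 3))) (c' (x + 1, (j : ZMod 3) + 1))))
      = faceSign (c' (x+1, 0)) (c' (x+1, 1)) (c' (x+1, 2))
        - faceSign (c' (x, 0)) (c' (x, 1)) (c' (x, 2)) := by
    intro x
    rw [Finset.sum_range_succ, Finset.sum_range_succ, Finset.sum_range_succ,
      Finset.sum_range_zero]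
    push_cast
    rw [zero_add, zero_add, h21, h11]
    linarith [key x]
  have : degRS L 3 c' = ∑ i ∈ Finset.range L,
      ((fun n : ℕ => faceSign (c' ((n : ZMod L), 0)) (c' ((n : ZMod L), 1)) (c' ((n : ZMod L), 2))) (i+1)
       - (fun n : ℕ => faceSign (c' ((n : ZMod L), 0)) (c' ((n : ZMod L), 1)) (c' ((n : ZMod L), 2))) i) := by
    unfold degRS
    refine Finset.sum_congr rfl fun i _ => ?_
    rw [expand (i : ZMod L)]
    push_cast
    ring
  rw [this, Finset.sum_range_sub
    (fun n : ℕ => faceSign (c' ((n : ZMod L), 0)) (c' ((n : ZMod L), 1)) (c' ((n : ZMod L), 2))) L]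
  simp [ZMod.natCast_self]

end deg3

lemma gen_ne {r s : ℕ} (hr : 3 ≤ r) (hs : 2 ≤ s) (f : ZMod r × ZMod s → Fin 4)
    (hf : IsProperColoring (TriRS r s) f) (x : ZMod r) (j : ZMod s) :
    f (x, j) ≠ f (x, j + 1) ∧ f (x, j) ≠ f (x + 1, j) ∧ f (x, j) ≠ f (x + 1, j + 1) := by
  haveI : Fact (1 < r) := ⟨by omega⟩
  haveI : Fact (1 < s) := ⟨by omega⟩
  have hx : x ≠ x + 1 := fun h => one_ne_zero (α := ZMod r) (by linear_combination -h)
  have hj : j ≠ j + 1 := fun h => one_ne_zero (α := ZMod s) (by linear_combination -h)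
  refine ⟨hf ⟨by simp [Prod.ext_iff, hj], ?_⟩, hf ⟨by simp [Prod.ext_iff, hx], ?_⟩,
    hf ⟨by simp [Prod.ext_iff, hx], ?_⟩⟩
  · have : (x, j + 1) - (x, j) = ((0 : ZMod r), (1 : ZMod s)) := by simp [Prod.ext_iff]
    rw [this]; simp [hexDirsM]
  · have : (x + 1, j) - (x, j) = ((1 : ZMod r), (0 : ZMod s)) := by simp [Prod.ext_iff]
    rw [this]; simp [hexDirsM]
  · have : (x + 1, j + 1) - (x, j) = ((1 : ZMod r), (1 : ZMod s)) := by simp [Prod.ext_iff]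
    rw [this]; simp [hexDirsM]

section glue
variable {L M : ℕ} (c : ZMod L × ZMod M → Fin 4) (c' : ZMod L × ZMod 3 → Fin 4)

lemma glue_lt (x : ZMod L) (k : ℕ) (hk : k < M) :
    glue L M c c' (x, (k : ZMod (M + 3))) = c (x, (k : ZMod M)) := by
  haveI : NeZero (M + 3) := ⟨by omega⟩
  unfold glue
  simp [ZMod.val_cast_of_lt (show k < M + 3 by omega), hk]

lemma glue_ge (x : ZMod L) (k : ℕ) (hk1 : M ≤ k) (hk2 : k < M + 3) :
    glue L M c c' (x, (k : ZMod (M + 3))) = c' (x, ((k - M : ℕ) : ZMod 3)) := by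
  haveI : NeZero (M + 3) := ⟨by omega⟩
  unfold glue
  simp [ZMod.val_cast_of_lt hk2, Nat.not_lt.mpr hk1]

end glue

section main
variable {L M : ℕ} (hL : 3 ≤ L) (hM : 3 ≤ M)
  (c : ZMod L × ZMod M → Fin 4) (hc : IsProperColoring (TriRS L M) c)
  (c' : ZMod L × ZMod 3 → Fin 4) (hc' : IsProperColoring (TriRS L 3) c')
  (htop : ∀ x : ZMod L, c' (x, 2) = c (x, ((M - 1 : ℕ) : ZMod M)))

include hL hM hc hc' htop in
lemma glue_aux (x : ZMod L) (y : ZMod (M + 3)) (e : ZMod L) (he : e = 0 ∨ e = 1) :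
    glue L M c c' (x, y) ≠ glue L M c c' (x + e, y + 1) := by
  haveI : NeZero (M + 3) := ⟨by omega⟩
  obtain ⟨k, hk, rfl⟩ : ∃ k : ℕ, k < M + 3 ∧ (k : ZMod (M + 3)) = y :=
    ⟨y.val, y.val_lt, ZMod.natCast_rightInverse y⟩
  have hcast : ((k : ZMod (M + 3)) + 1) = ((k + 1 : ℕ) : ZMod (M + 3)) := by push_cast; ring
  rw [hcast]
  have vert := fun (j : ZMod M) => (gen_ne hL (by omega) c hc x j).1
  have diag := fun (j : ZMod M) => (gen_ne hL (by omega) c hc x j).2.2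
  have vert' := fun (j : ZMod 3) => (gen_ne hL (by omega) c' hc' x j).1
  have diag' := fun (j : ZMod 3) => (gen_ne hL (by omega) c' hc' x j).2.2
  rcases lt_or_ge (k + 1) M with h1 | h1
  · -- both rows in c
    rw [glue_lt c c' x k (by omega), glue_lt c c' _ (k + 1) h1]
    have : ((k + 1 : ℕ) : ZMod M) = (k : ZMod M) + 1 := by push_cast; ring
    rw [this]
    rcases he with rfl | rfl
    · rw [add_zero]; exact vert _
    · exact diag _
  · rcases lt_or_ge k M with h2 | h2
    · -- seam: k = M - 1, k + 1 = M
      have hkM : k = M - 1 := by omega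
      rw [glue_lt c c' x k h2, glue_ge c c' _ (k + 1) (by omega) (by omega)]
      have e1 : c (x, (k : ZMod M)) = c' (x, 2) := by rw [htop x, hkM]
      have e2 : ((k + 1 - M : ℕ) : ZMod 3) = (2 : ZMod 3) + 1 := by
        have : k + 1 - M = 0 := by omega
        rw [this]; decide
      rw [e1, e2]
      rcases he with rfl | rfl
      · rw [add_zero]; exact vert' _
      · exact diag' _
    · rcases lt_or_ge (k + 1) (M + 3) with h3 | h3
      · -- both rows in c'
        rw [glue_ge c c' x k h2 hk, glue_ge c c' _ (k + 1) (by omega) h3]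
        have : ((k + 1 - M : ℕ) : ZMod 3) = ((k - M : ℕ) : ZMod 3) + 1 := by
          have : k + 1 - M = (k - M) + 1 := by omega
          rw [this]; push_cast; ring
        rw [this]
        rcases he with rfl | rfl
        · rw [add_zero]; exact vert' _
        · exact diag' _
      · -- wrap: k = M + 2
        have hkM : k = M + 2 := by omega
        have e0 : ((k + 1 : ℕ) : ZMod (M + 3)) = ((0 : ℕ) : ZMod (M + 3)) := by
          have : k + 1 = M + 3 := by omega
          rw [this]; simp
        rw [e0, glue_ge c c' x k h2 hk, glue_lt c c' _ 0 (by omega)]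
        have e1 : c' (x, ((k - M : ℕ) : ZMod 3)) = c (x, ((M - 1 : ℕ) : ZMod M)) := by
          have : k - M = 2 := by omega
          rw [this]; exact htop x
        have e2 : ((0 : ℕ) : ZMod M) = ((M - 1 : ℕ) : ZMod M) + 1 := by
          have : (M - 1 : ℕ) + 1 = M := by omega
          rw [show ((0:ℕ) : ZMod M) = ((M :ℕ) : ZMod M) by simp, ← this]
          push_cast; ring
        rw [e1, e2]
        rcases he with rfl | rfl
        · rw [add_zero]; exact vert _
        · exact diag _

include hL hM hc hc' in
lemma glue_horiz (x : ZMod L) (y : ZMod (M + 3)) :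
    glue L M c c' (x, y) ≠ glue L M c c' (x + 1, y) := by
  haveI : NeZero (M + 3) := ⟨by omega⟩
  obtain ⟨k, hk, rfl⟩ : ∃ k : ℕ, k < M + 3 ∧ (k : ZMod (M + 3)) = y :=
    ⟨y.val, y.val_lt, ZMod.natCast_rightInverse y⟩
  rcases lt_or_ge k M with h | h
  · rw [glue_lt c c' x k h, glue_lt c c' _ k h]
    exact (gen_ne hL (by omega) c hc x _).2.1
  · rw [glue_ge c c' x k h hk, glue_ge c c' _ k h hk]
    exact (gen_ne hL (by omega) c' hc' x _).2.1

end main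

lemma peel4 (m : ℕ) (f : ℕ → ℤ) :
    ∑ j ∈ Finset.range (m+3+3), f j =
      (∑ j ∈ Finset.range (m+2), f j) + (f (m+2) + (f (m+3) + (f (m+4) + f (m+5)))) := by
  have h : m+3+3 = m+5+1 := by omega
  rw [h, Finset.sum_range_succ, show m+5 = m+4+1 from by omega, Finset.sum_range_succ,
    show m+4 = m+3+1 from by omega, Finset.sum_range_succ,
    show m+3 = m+2+1 from by omega, Finset.sum_range_succ]
  ring

lemma peel1 (m : ℕ) (f : ℕ → ℤ) :
    ∑ j ∈ Finset.range (m+3), f j = (∑ j ∈ Finset.range (m+2), f j) + f (m+2) := by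
  rw [show m+3 = m+2+1 from by omega, Finset.sum_range_succ]

lemma peel3 (f : ℕ → ℤ) :
    ∑ j ∈ Finset.range 3, f j = f 0 + (f 1 + f 2) := by
  rw [Finset.sum_range_succ, Finset.sum_range_succ, Finset.sum_range_succ,
    Finset.sum_range_zero]
  ring

section inner2
variable {L m : ℕ} (c : ZMod L × ZMod (m+3) → Fin 4) (c' : ZMod L × ZMod 3 → Fin 4)
  (htop : ∀ x : ZMod L, c' (x, 2) = c (x, ((m + 3 - 1 : ℕ) : ZMod (m+3))))

include htop in
lemma glue_inner_sum (x : ZMod L) :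
    (∑ j ∈ Finset.range (m+3+3),
      (faceSign (glue L (m+3) c c' (x, (j : ZMod (m+3+3))))
                (glue L (m+3) c c' (x + 1, (j : ZMod (m+3+3)) + 1))
                (glue L (m+3) c c' (x, (j : ZMod (m+3+3)) + 1))
        + faceSign (glue L (m+3) c c' (x, (j : ZMod (m+3+3))))
                   (glue L (m+3) c c' (x + 1, (j : ZMod (m+3+3))))
                   (glue L (m+3) c c' (x + 1, (j : ZMod (m+3+3)) + 1))))
    = (∑ j ∈ Finset.range (m+3),
      (faceSign (c (x, (j : ZMod (m+3)))) (c (x + 1, (j : ZMod (m+3)) + 1)) (c (x, (j : ZMod (m+3)) + 1))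
        + faceSign (c (x, (j : ZMod (m+3)))) (c (x + 1, (j : ZMod (m+3)))) (c (x + 1, (j : ZMod (m+3)) + 1))))
    + (∑ j ∈ Finset.range 3,
      (faceSign (c' (x, (j : ZMod 3))) (c' (x + 1, (j : ZMod 3) + 1)) (c' (x, (j : ZMod 3) + 1))
        + faceSign (c' (x, (j : ZMod 3))) (c' (x + 1, (j : ZMod 3))) (c' (x + 1, (j : ZMod 3) + 1)))) := by
  have e1 : ∀ (z : ZMod L) (j : ℕ), j < m+3 →
      glue L (m+3) c c' (z, (j : ZMod (m+3+3))) = c (z, (j : ZMod (m+3))) :=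
    fun z j hj => glue_lt c c' z j hj
  have e2 : ∀ (z : ZMod L) (j : ℕ), m+3 ≤ j → j < m+3+3 →
      glue L (m+3) c c' (z, (j : ZMod (m+3+3))) = c' (z, ((j - (m+3) : ℕ) : ZMod 3)) :=
    fun z j h1 h2 => glue_ge c c' z j h1 h2
  have htop' : ∀ z : ZMod L, c (z, ((m+2 : ℕ) : ZMod (m+3))) = c' (z, 2) :=
    fun z => (htop z).symm
  rw [peel4, peel1, peel3]
  have hmain : ∀ j ∈ Finset.range (m+2),
      (faceSign (glue L (m+3) c c' (x, (j : ZMod (m+3+3))))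
                (glue L (m+3) c c' (x + 1, (j : ZMod (m+3+3)) + 1))
                (glue L (m+3) c c' (x, (j : ZMod (m+3+3)) + 1))
        + faceSign (glue L (m+3) c c' (x, (j : ZMod (m+3+3))))
                   (glue L (m+3) c c' (x + 1, (j : ZMod (m+3+3))))
                   (glue L (m+3) c c' (x + 1, (j : ZMod (m+3+3)) + 1)))
      = (faceSign (c (x, (j : ZMod (m+3)))) (c (x + 1, (j : ZMod (m+3)) + 1)) (c (x, (j : ZMod (m+3)) + 1))
        + faceSign (c (x, (j : ZMod (m+3)))) (c (x + 1, (j : ZMod (m+3)))) (c (x + 1, (j : ZMod (m+3)) + 1))) := by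
    intro j hj
    simp only [Finset.mem_range] at hj
    rw [show ((j : ZMod (m+3+3)) + 1) = ((j+1 : ℕ) : ZMod (m+3+3)) from by push_cast; ring,
        show ((j : ZMod (m+3)) + 1) = ((j+1 : ℕ) : ZMod (m+3)) from by push_cast; ring,
        e1 x j (by omega), e1 (x+1) (j+1) (by omega), e1 x (j+1) (by omega),
        e1 (x+1) j (by omega)]
  rw [Finset.sum_congr rfl hmain]
  -- seam terms
  have r2 : ∀ z : ZMod L, glue L (m+3) c c' (z, ((m+2 : ℕ) : ZMod (m+3+3))) = c' (z, 2) := by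
    intro z
    rw [e1 z (m+2) (by omega), htop' z]
  have r3 : ∀ z : ZMod L, glue L (m+3) c c' (z, ((m+3 : ℕ) : ZMod (m+3+3))) = c' (z, 0) := by
    intro z
    rw [e2 z (m+3) (by omega) (by omega), show m+3-(m+3) = 0 from by omega, Nat.cast_zero]
  have r4 : ∀ z : ZMod L, glue L (m+3) c c' (z, ((m+4 : ℕ) : ZMod (m+3+3))) = c' (z, 1) := by
    intro z
    rw [e2 z (m+4) (by omega) (by omega), show m+4-(m+3) = 1 from by omega, Nat.cast_one]
  have r5 : ∀ z : ZMod L, glue L (m+3) c c' (z, ((m+5 : ℕ) : ZMod (m+3+3))) = c' (z, 2) := by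
    intro z
    rw [e2 z (m+5) (by omega) (by omega), show m+5-(m+3) = 2 from by omega]
    norm_num
  have r6 : ∀ z : ZMod L, glue L (m+3) c c' (z, ((m+6 : ℕ) : ZMod (m+3+3))) = c (z, (0 : ZMod (m+3))) := by
    intro z
    rw [show ((m+6 : ℕ) : ZMod (m+3+3)) = ((0 : ℕ) : ZMod (m+3+3)) from by
          rw [show (m+6 : ℕ) = m+3+3 from by omega]; simp,
        e1 z 0 (by omega), Nat.cast_zero]
  have s2 : ((m+2 : ℕ) : ZMod (m+3+3)) + 1 = ((m+3 : ℕ) : ZMod (m+3+3)) := by push_cast; ring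
  have s3 : ((m+3 : ℕ) : ZMod (m+3+3)) + 1 = ((m+4 : ℕ) : ZMod (m+3+3)) := by push_cast; ring
  have s4 : ((m+4 : ℕ) : ZMod (m+3+3)) + 1 = ((m+5 : ℕ) : ZMod (m+3+3)) := by push_cast; ring
  have s5 : ((m+5 : ℕ) : ZMod (m+3+3)) + 1 = ((m+6 : ℕ) : ZMod (m+3+3)) := by push_cast; ring
  simp only [s2, s3, s4, s5, r2, r3, r4, r5, r6]
  -- c-side seam term on RHS
  have t1 : ((m+2 : ℕ) : ZMod (m+3)) + 1 = (0 : ZMod (m+3)) := by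
    have h : ((m+2 : ℕ) : ZMod (m+3)) + 1 = ((m+3 : ℕ) : ZMod (m+3)) := by push_cast; ring
    rw [h, ZMod.natCast_self]
  simp only [htop', t1]
  -- c'-side casts
  have u0 : ((0 : ℕ) : ZMod 3) = (0 : ZMod 3) := by norm_num
  have u1 : ((1 : ℕ) : ZMod 3) = (1 : ZMod 3) := by norm_num
  have u2 : ((2 : ℕ) : ZMod 3) = (2 : ZMod 3) := by norm_num
  simp only [u0, u1, u2]
  have v0 : (0 : ZMod 3) + 1 = 1 := by decide
  have v1 : (1 : ZMod 3) + 1 = 2 := by decide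
  have v2 : (2 : ZMod 3) + 1 = 0 := by decide
  simp only [v0, v1, v2]
  ring

end inner2


/-- **Gluing lemma.** If `c` is a proper 4-coloring of T(L,M) and `c'` one of
T(L,3) with the same top row (`c'(x,2) = c(x,M−1)` for all `x`), then the glued
coloring is a proper 4-coloring of T(L,M+3) of the same degree as `c`. -/
theorem glue_proper_deg (L M : ℕ) (hL : 3 ≤ L) (hM : 3 ≤ M)
    (c : ZMod L × ZMod M → Fin 4) (hc : IsProperColoring (TriRS L M) c)
    (c' : ZMod L × ZMod 3 → Fin 4) (hc' : IsProperColoring (TriRS L 3) c')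
    (htop : ∀ x : ZMod L, c' (x, 2) = c (x, ((M - 1 : ℕ) : ZMod M))) :
    IsProperColoring (TriRS L (M + 3)) (glue L M c c') ∧
    degRS L (M + 3) (glue L M c c') = degRS L M c := by
  obtain ⟨m, rfl⟩ : ∃ m, M = m + 3 := ⟨M - 3, by omega⟩
  constructor
  · rintro ⟨x, y⟩ ⟨x', y'⟩ ⟨hne, hmem⟩
    simp only [hexDirsM, Prod.mk_sub_mk, Set.mem_insert_iff, Set.mem_singleton_iff,
      Prod.mk.injEq] at hmem
    have haux0 := fun (a : ZMod L) (b : ZMod (m+3+3)) => by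
      have h := glue_aux hL hM c hc c' hc' htop a b 0 (Or.inl rfl)
      rwa [add_zero] at h
    rcases hmem with ⟨h1, h2⟩ | ⟨h1, h2⟩ | ⟨h1, h2⟩ | ⟨h1, h2⟩ | ⟨h1, h2⟩ | ⟨h1, h2⟩
    · rw [show x' = x + 1 from by linear_combination h1, show y' = y from by linear_combination h2]
      exact glue_horiz hL hM c hc c' hc' x y
    · rw [show x = x' + 1 from by linear_combination -h1, show y = y' from by linear_combination -h2]
      exact (glue_horiz hL hM c hc c' hc' x' y').symm
    · rw [show x' = x from by linear_combination h1, show y' = y + 1 from by linear_combination h2]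
      exact haux0 x y
    · rw [show x = x' from by linear_combination -h1, show y = y' + 1 from by linear_combination -h2]
      exact (haux0 x' y').symm
    · rw [show x' = x + 1 from by linear_combination h1, show y' = y + 1 from by linear_combination h2]
      exact glue_aux hL hM c hc c' hc' htop x y 1 (Or.inr rfl)
    · rw [show x = x' + 1 from by linear_combination -h1, show y = y' + 1 from by linear_combination -h2]
      exact (glue_aux hL hM c hc c' hc' htop x' y' 1 (Or.inr rfl)).symm
  · have main : degRS L (m+3+3) (glue L (m+3) c c') = degRS L (m+3) c + degRS L 3 c' := by
      unfold degRS
      rw [← Finset.sum_add_distrib]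
      exact Finset.sum_congr rfl fun i _ => glue_inner_sum c c' htop (i : ZMod L)
    rw [main, deg3_eq_zero hL c' hc', add_zero]
end
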